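/- Let n ≥ 1, k ≥ 1, and let π = q_1 q_2 ⋯ q_n ∈ CPERMS(n,k) with q_i = v_i^{c_i}. The length of the longest decreasing prefix of π equals the least j ∈ {1,…,n−1} for which at least one of the following holds, or equals n if no such j exists: (a) #{i ∈ {1,…,j} : v_i < v_{i+1}} = 2; (b) #{i ∈ {1,…,j} : v_i < v_{i+1}} = 1 and v_{j+1} < v_1; (c) k > 1, v_j < v_{j+1}, and (c_{j+1} − c_j) mod k ≠ 1; (d) k > 1, v_j > v_{j+1}, and c_j ≠ c_{j+1}. -/

import Mathlib

/-- Increment the colour of every symbol of a coloured pre-permutation by `s`, modulo `k`. -/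
def colShift (k s : ℕ) (p : List (ℕ × ℕ)) : List (ℕ × ℕ) :=
  p.map (fun x => (x.1, (x.2 + s) % k))

/-- The colour-incrementing prefix-reversal of length `j` (a "flip"):
reverse the first `j` symbols and increment their colours by 1 modulo `k`. -/
def cflip (k j : ℕ) (p : List (ℕ × ℕ)) : List (ℕ × ℕ) :=
  colShift k 1 (p.take j).reverse ++ p.drop j

/-- `p` is a `k`-coloured permutation of order `n`: its values are a permutation
of `{1,…,n}` and all its colours lie in `{0,…,k-1}`. -/
def IsCPerm (n k : ℕ) (p : List (ℕ × ℕ)) : Prop :=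
  (p.map Prod.fst).Perm ((List.range n).map (· + 1)) ∧ ∀ x ∈ p, x.2 < k

/-- `p` is a pre-perm: distinct values from `{1,…,n}`, colours in `{0,…,k-1}`. -/
def IsPrePerm (n k : ℕ) (p : List (ℕ × ℕ)) : Prop :=
  (p.map Prod.fst).Nodup ∧ ∀ x ∈ p, (1 ≤ x.1 ∧ x.1 ≤ n) ∧ x.2 < k

/-- The circular string `ρ(p) = p^{+(k-1)} · p^{+(k-2)} ⋯ p^{+0}`. -/
def rho (k : ℕ) (p : List (ℕ × ℕ)) : List (ℕ × ℕ) :=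
  ((List.range k).reverse).flatMap (fun s => colShift k s p)

/-- `ρ(p)_i`: the length `j-1` contiguous subword of the circular string `ρ(p)`
ending with `r_{i-1}` (1-based indices modulo `m = k·j`, where `j = p.length`). -/
def rhoSub (k : ℕ) (p : List (ℕ × ℕ)) (i : ℕ) : List (ℕ × ℕ) :=
  (List.range (p.length - 1)).map
    (fun t => (rho k p).getD ((i + t + k * p.length - p.length) % (k * p.length)) (0, 0))

/-- Fuel-indexed version of the recursive listing `Rec(p,k)`; `fuel = p.length`. -/
def RecAux (k : ℕ) : ℕ → List (ℕ × ℕ) → List (List (ℕ × ℕ))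
  | 0, p => (List.range k).map (fun s => colShift k s p)
  | fuel + 1, p =>
    if p.length ≤ 1 then (List.range k).map (fun s => colShift k s p)
    else ((List.range (k * p.length)).reverse).flatMap
      (fun i => (RecAux k fuel (rhoSub k p (i + 1))).map (fun q => q ++ [(rho k p).getD i (0, 0)]))

/-- The recursive listing `Rec(p,k)`:
`Rec(p₁,k) = p₁, p₁^{+1}, …, p₁^{+(k-1)}` when `p` has length 1, and
`Rec(p,k) = Rec(ρ(p)_m,k)·r_m, Rec(ρ(p)_{m-1},k)·r_{m-1}, …, Rec(ρ(p)_1,k)·r_1` otherwise. -/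
def RecList (k : ℕ) (p : List (ℕ × ℕ)) : List (List (ℕ × ℕ)) :=
  RecAux k p.length p

/-- The identity coloured permutation `1⁰2⁰⋯n⁰`. -/
def idPerm (n : ℕ) : List (ℕ × ℕ) := (List.range n).map (fun i => (i + 1, 0))
/-- A coloured permutation is increasing if it is a length-`n` subword of the circular
string `ρ(1⁰2⁰⋯n⁰)`; equivalently, each symbol is followed either by the next value with
the same colour, or (when its value is `n`) by value `1` with colour decremented mod `k`. -/
def IsIncreasing (n k : ℕ) (p : List (ℕ × ℕ)) : Prop :=
  IsCPerm n k p ∧ ∀ i, i + 1 < p.length →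
    ((p.getD i (0,0)).1 < n ∧ (p.getD (i+1) (0,0)).1 = (p.getD i (0,0)).1 + 1 ∧
      (p.getD (i+1) (0,0)).2 = (p.getD i (0,0)).2) ∨
    ((p.getD i (0,0)).1 = n ∧ (p.getD (i+1) (0,0)).1 = 1 ∧
      (p.getD (i+1) (0,0)).2 = ((p.getD i (0,0)).2 + k - 1) % k)

/-- A permutation is decreasing if it is the reversal of an increasing permutation. -/
def IsDecreasing (n k : ℕ) (p : List (ℕ × ℕ)) : Prop := IsIncreasing n k p.reverse

/-- A pre-perm is decreasing if it is a subsequence of a decreasing permutation. -/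
def IsDecreasingPre (n k : ℕ) (p : List (ℕ × ℕ)) : Prop :=
  ∃ q, IsDecreasing n k q ∧ p.Sublist q

/-- The condition, on a position `j` of a coloured permutation `π` (1-based values
`v_i` and colours `c_i`), tested by the `Successor` algorithm: (a) two ascents among
positions `1..j`; (b) one ascent and `v_{j+1} < v_1`; (c) `k > 1`, `v_j < v_{j+1}` and
`(c_{j+1} - c_j) mod k ≠ 1`; (d) `k > 1`, `v_j > v_{j+1}` and `c_j ≠ c_{j+1}`. -/
def descCond (k : ℕ) (π : List (ℕ × ℕ)) (j : ℕ) : Prop :=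
  ((Finset.Icc 1 j).filter (fun i => (π.getD (i - 1) (0,0)).1 < (π.getD i (0,0)).1)).card = 2 ∨
  (((Finset.Icc 1 j).filter (fun i => (π.getD (i - 1) (0,0)).1 < (π.getD i (0,0)).1)).card = 1 ∧
    (π.getD j (0,0)).1 < (π.getD 0 (0,0)).1) ∨
  (1 < k ∧ (π.getD (j - 1) (0,0)).1 < (π.getD j (0,0)).1 ∧
    ((π.getD j (0,0)).2 + k - (π.getD (j - 1) (0,0)).2) % k ≠ 1) ∨
  (1 < k ∧ (π.getD j (0,0)).1 < (π.getD (j - 1) (0,0)).1 ∧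
    (π.getD (j - 1) (0,0)).2 ≠ (π.getD j (0,0)).2)



namespace LDP



def pos (n : ℕ) (x : ℕ × ℕ) : ℕ := x.2 * n + (n - x.1)

def gap (n k : ℕ) (x y : ℕ × ℕ) : ℕ := (pos n y + k * n - pos n x) % (k * n)

def gsum (n k : ℕ) (π : List (ℕ × ℕ)) (t : ℕ) : ℕ :=
  ∑ i ∈ Finset.range t, gap n k (π.getD i (0,0)) (π.getD (i+1) (0,0))

def Valid (n k : ℕ) (x : ℕ × ℕ) : Prop := 1 ≤ x.1 ∧ x.1 ≤ n ∧ x.2 < k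

lemma pos_lt {n k : ℕ} {x : ℕ × ℕ} (hx : Valid n k x) : pos n x < k * n := by
  obtain ⟨h1, h2, h3⟩ := hx
  have : n - x.1 < n := by omega
  calc pos n x < x.2 * n + n := by unfold pos; omega
    _ = (x.2 + 1) * n := by ring
    _ ≤ k * n := Nat.mul_le_mul_right n (by omega)

lemma pos_mod_n {n k : ℕ} {x : ℕ × ℕ} (hx : Valid n k x) : pos n x % n = n - x.1 := by
  obtain ⟨h1, h2, _⟩ := hx
  unfold pos
  rw [Nat.mul_add_mod', Nat.mod_eq_of_lt (by omega)]

lemma pos_inj {n k : ℕ} {x y : ℕ × ℕ} (hx : Valid n k x) (hy : Valid n k y)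
    (h : pos n x = pos n y) : x = y := by
  have h1 := pos_mod_n hx
  have h2 := pos_mod_n hy
  have hv : x.1 = y.1 := by
    have h3 : n - x.1 = n - y.1 := by rw [← h1, ← h2, h]
    obtain ⟨a1, a2, _⟩ := hx; obtain ⟨b1, b2, _⟩ := hy
    omega
  have hc : x.2 = y.2 := by
    unfold pos at h
    rw [hv] at h
    have : x.2 * n = y.2 * n := by omega
    have hn : 0 < n := lt_of_lt_of_le hx.1 hx.2.1
    exact Nat.eq_of_mul_eq_mul_right hn this
  exact Prod.ext hv hc

lemma gap_lt {n k : ℕ} (hn : 1 ≤ n) (hk : 1 ≤ k) (x y : ℕ × ℕ) : gap n k x y < k * n :=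
  Nat.mod_lt _ (by positivity)

lemma gap_add_modEq {n k : ℕ} {x : ℕ × ℕ} (hx : Valid n k x) (y : ℕ × ℕ) :
    gap n k x y + pos n x ≡ pos n y [MOD k * n] := by
  have h1 : pos n x ≤ pos n y + k * n := le_add_left (le_of_lt (pos_lt hx))
  calc gap n k x y + pos n x
      ≡ (pos n y + k * n - pos n x) + pos n x [MOD k*n] :=
        Nat.ModEq.add_right _ (Nat.mod_modEq _ _)
    _ = pos n y + k * n := Nat.sub_add_cancel h1
    _ ≡ pos n y + 0 [MOD k*n] := Nat.ModEq.add_left _ (Nat.modEq_zero_iff_dvd.mpr dvd_rfl)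
    _ = pos n y := by ring

lemma gap_eq_of_modEq {n k : ℕ} {x y : ℕ × ℕ} (hx : Valid n k x) {g : ℕ}
    (hg : g < k * n) (h : g + pos n x ≡ pos n y [MOD k * n]) : gap n k x y = g := by
  have h2 := gap_add_modEq hx y
  have h3 : gap n k x y + pos n x ≡ g + pos n x [MOD k*n] := h2.trans h.symm
  have h4 : gap n k x y ≡ g [MOD k*n] := h3.add_right_cancel' _
  have h5 : gap n k x y < k * n := Nat.mod_lt _ (by omega)
  have := h4
  unfold Nat.ModEq at this
  rwa [Nat.mod_eq_of_lt h5, Nat.mod_eq_of_lt hg] at this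

lemma colour_modEq {n k : ℕ} {x y : ℕ × ℕ} (hx : Valid n k x) (hy : Valid n k y) :
    ((y.2 + k - x.2) % k + x.2) * n ≡ y.2 * n [MOD k * n] := by
  have hk : 0 < k := hx.2.2.trans_le' (Nat.zero_le _)
  have h1 : (y.2 + k - x.2) % k + x.2 ≡ (y.2 + k - x.2) + x.2 [MOD k] :=
    (Nat.mod_modEq _ _).add_right _
  have h2 : (y.2 + k - x.2) + x.2 = y.2 + k := by have := hx.2.2; omega
  have h3 : y.2 + k ≡ y.2 [MOD k] := by
    have : y.2 + k ≡ y.2 + 0 [MOD k] :=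
      Nat.ModEq.add_left _ (Nat.modEq_zero_iff_dvd.mpr dvd_rfl)
    simpa using this
  have h4 : (y.2 + k - x.2) % k + x.2 ≡ y.2 [MOD k] := h1.trans (by rw [h2]; exact h3)
  have := Nat.ModEq.mul_right' n h4
  exact this
  
lemma Dn_le {n k D : ℕ} (hk : 0 < k) (hD : D < k) : D * n ≤ k * n - n := by
  have h1 : D * n ≤ (k-1) * n := Nat.mul_le_mul_right n (by omega)
  have h2 : (k-1) * n = k * n - 1 * n := by rw [← Nat.sub_mul]
  omega

lemma gap_desc {n k : ℕ} {x y : ℕ × ℕ} (hx : Valid n k x) (hy : Valid n k y)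
    (h : y.1 < x.1) : gap n k x y = ((y.2 + k - x.2) % k) * n + (x.1 - y.1) := by
  have hk : 0 < k := hx.2.2.trans_le' (Nat.zero_le _)
  have hn : 0 < n := hx.1.trans hx.2.1
  have hD : (y.2 + k - x.2) % k < k := Nat.mod_lt _ hk
  have hDn := Dn_le (n := n) hk hD
  apply gap_eq_of_modEq hx
  · have hx1 : x.1 ≤ n := hx.2.1
    have hy1 : 1 ≤ y.1 := hy.1
    have hkn : n ≤ k * n := Nat.le_mul_of_pos_left n hk
    omega
  · have key := colour_modEq hx hy
    have e1 : ((y.2 + k - x.2) % k) * n + (x.1 - y.1) + pos n x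
        = ((y.2 + k - x.2) % k + x.2) * n + (n - y.1) := by
      unfold pos
      have : ((y.2 + k - x.2) % k + x.2) * n = ((y.2 + k - x.2) % k) * n + x.2 * n := by ring
      have := hx.2.1; have := hy.2.1; omega
    rw [e1]
    exact Nat.ModEq.add_right _ key

lemma gap_asc {n k : ℕ} {x y : ℕ × ℕ} (hx : Valid n k x) (hy : Valid n k y)
    (h : x.1 < y.1) :
    gap n k x y = (((y.2 + k - x.2) % k) * n + k * n - (y.1 - x.1)) % (k * n) := by
  have hk : 0 < k := hx.2.2.trans_le' (Nat.zero_le _)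
  have hn : 0 < n := hx.1.trans hx.2.1
  have hkn : n ≤ k * n := Nat.le_mul_of_pos_left n hk
  have hD : (y.2 + k - x.2) % k < k := Nat.mod_lt _ hk
  have hDn := Dn_le (n := n) hk hD
  have hy1 : y.1 ≤ n := hy.2.1
  set D := (y.2 + k - x.2) % k with hDdef
  set W := D * n + k * n - (y.1 - x.1) with hW
  have hmod : W % (k * n) + pos n x ≡ pos n y [MOD k * n] := by
    have key := colour_modEq hx hy
    have e1 : W + pos n x = (D + x.2) * n + (k * n + (n - y.1)) := by
      unfold pos
      have : (D + x.2) * n = D * n + x.2 * n := by ring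
      omega
    calc W % (k * n) + pos n x ≡ W + pos n x [MOD k * n] :=
          (Nat.mod_modEq _ _).add_right _
      _ = (D + x.2) * n + (k * n + (n - y.1)) := e1
      _ ≡ y.2 * n + (k * n + (n - y.1)) [MOD k * n] := key.add_right _
      _ ≡ y.2 * n + (0 + (n - y.1)) [MOD k * n] :=
          Nat.ModEq.add_left _ (Nat.ModEq.add_right _ (Nat.modEq_zero_iff_dvd.mpr dvd_rfl))
      _ = pos n y := by unfold pos; omega
  exact gap_eq_of_modEq hx (Nat.mod_lt _ (by positivity)) hmod


def Bad (k : ℕ) (x y : ℕ × ℕ) : Prop :=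
  (1 < k ∧ x.1 < y.1 ∧ (y.2 + k - x.2) % k ≠ 1) ∨ (1 < k ∧ y.1 < x.1 ∧ x.2 ≠ y.2)

lemma gap_asc_val {n k : ℕ} {x y : ℕ × ℕ} (hx : Valid n k x) (hy : Valid n k y)
    (h : x.1 < y.1) :
    ((y.2 + k - x.2) % k = 0 → gap n k x y = k * n - (y.1 - x.1)) ∧
    (1 ≤ (y.2 + k - x.2) % k → gap n k x y = ((y.2 + k - x.2) % k) * n - (y.1 - x.1)) := by
  have hk : 0 < k := hx.2.2.trans_le' (Nat.zero_le _)
  have hn : 0 < n := hx.1.trans hx.2.1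
  have hkn : n ≤ k * n := Nat.le_mul_of_pos_left n hk
  have hD : (y.2 + k - x.2) % k < k := Nat.mod_lt _ hk
  have hDn := Dn_le (n := n) hk hD
  have hy1 : y.1 ≤ n := hy.2.1
  have hx1 : 1 ≤ x.1 := hx.1
  have hg := gap_asc hx hy h
  set D := (y.2 + k - x.2) % k with hDdef
  constructor
  · intro h0
    rw [h0] at hg
    rw [hg]
    have : 0 * n + k * n - (y.1 - x.1) = k * n - (y.1 - x.1) := by omega
    rw [this]
    exact Nat.mod_eq_of_lt (by omega)
  · intro h1
    have hnD : n ≤ D * n := Nat.le_mul_of_pos_left n h1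
    have e : D * n + k * n - (y.1 - x.1) = k * n + (D * n - (y.1 - x.1)) := by omega
    rw [hg, e, Nat.add_mod_left, Nat.mod_eq_of_lt (by omega)]

lemma colour_ne_D {k : ℕ} {x y : ℕ × ℕ} (hxc : x.2 < k) (hyc : y.2 < k)
    (hne : x.2 ≠ y.2) : (y.2 + k - x.2) % k ≠ 0 := by
  intro h0
  have hdvd : k ∣ (y.2 + k - x.2) := Nat.dvd_of_mod_eq_zero h0
  obtain ⟨c, hc⟩ := hdvd
  rcases c with _ | _ | c
  · omega
  · omega
  · have : k * 2 ≤ k * (c + 1 + 1) := Nat.mul_le_mul_left k (by omega)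
    omega

lemma gap_bad {n k : ℕ} {x y : ℕ × ℕ} (hx : Valid n k x) (hy : Valid n k y)
    (hbad : Bad k x y) : n ≤ gap n k x y := by
  have hk : 0 < k := hx.2.2.trans_le' (Nat.zero_le _)
  have hn : 0 < n := hx.1.trans hx.2.1
  have hD : (y.2 + k - x.2) % k < k := Nat.mod_lt _ hk
  have hy1 : y.1 ≤ n := hy.2.1
  have hx1 : 1 ≤ x.1 := hx.1
  have hx1' : x.1 ≤ n := hx.2.1
  have hyy1 : 1 ≤ y.1 := hy.1
  rcases hbad with ⟨hk1, hlt, hD1⟩ | ⟨hk1, hlt, hne⟩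
  · have h2n : 2 * n ≤ k * n := Nat.mul_le_mul_right n hk1
    rcases Nat.eq_zero_or_pos ((y.2 + k - x.2) % k) with h0 | h1
    · rw [(gap_asc_val hx hy hlt).1 h0]
      omega
    · have hD2 : 2 ≤ (y.2 + k - x.2) % k := by omega
      have h2nD : 2 * n ≤ ((y.2 + k - x.2) % k) * n := Nat.mul_le_mul_right n hD2
      rw [(gap_asc_val hx hy hlt).2 h1]
      omega
  · have hD0 : (y.2 + k - x.2) % k ≠ 0 := colour_ne_D hx.2.2 hy.2.2 hne
    have h1n : 1 * n ≤ ((y.2 + k - x.2) % k) * n := Nat.mul_le_mul_right n (by omega)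
    rw [gap_desc hx hy hlt]
    omega

lemma gap_good {n k : ℕ} {x y : ℕ × ℕ} (hx : Valid n k x) (hy : Valid n k y)
    (hne : x.1 ≠ y.1) (hgood : ¬ Bad k x y) :
    gap n k x y ≤ n - 1 ∧ (y.1 < x.1 → gap n k x y = x.1 - y.1) ∧
      (x.1 < y.1 → gap n k x y = n - (y.1 - x.1)) := by
  have hk : 0 < k := hx.2.2.trans_le' (Nat.zero_le _)
  have hn : 0 < n := hx.1.trans hx.2.1
  have hy1 : y.1 ≤ n := hy.2.1
  have hx1 : 1 ≤ x.1 := hx.1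
  have hx1' : x.1 ≤ n := hx.2.1
  have hyy1 : 1 ≤ y.1 := hy.1
  unfold Bad at hgood
  push_neg at hgood
  rcases Nat.lt_or_ge x.1 y.1 with hlt | hge
  · -- ascent
    by_cases hk2 : 1 < k
    · have hD1 : (y.2 + k - x.2) % k = 1 := (hgood.1 hk2 hlt)
      have hg := (gap_asc_val hx hy hlt).2 (by omega)
      rw [hD1, one_mul] at hg
      refine ⟨by omega, fun hh => absurd hlt (by omega), fun _ => hg⟩
    · have hk1 : k = 1 := by omega
      subst hk1
      have hD : (y.2 + 1 - x.2) % 1 = 0 := Nat.mod_one _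
      have hg := (gap_asc_val hx hy hlt).1 hD
      rw [one_mul] at hg
      refine ⟨by omega, fun hh => absurd hlt (by omega), fun _ => hg⟩
  · have hlt : y.1 < x.1 := by omega
    have hce : x.2 = y.2 := by
      by_cases hk2 : 1 < k
      · exact hgood.2 hk2 hlt
      · have := hx.2.2; have := hy.2.2; omega
    have hD : (y.2 + k - x.2) % k = 0 := by
      have : y.2 + k - x.2 = k := by rw [hce]; omega
      rw [this, Nat.mod_self]
    have hg := gap_desc hx hy hlt
    rw [hD, zero_mul, zero_add] at hg
    exact ⟨by omega, fun _ => hg, fun hh => absurd hlt (by omega)⟩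

lemma gap_pos {n k : ℕ} {x y : ℕ × ℕ} (hx : Valid n k x) (hy : Valid n k y)
    (hne : x.1 ≠ y.1) : 0 < gap n k x y := by
  have hn : 0 < n := hx.1.trans hx.2.1
  by_cases hb : Bad k x y
  · have := gap_bad hx hy hb; omega
  · obtain ⟨h1, h2, h3⟩ := gap_good hx hy hne hb
    have hy1 : y.1 ≤ n := hy.2.1
    have hx1 : 1 ≤ x.1 := hx.1
    have hx2 : x.1 ≤ n := hx.2.1
    have hyy : 1 ≤ y.1 := hy.1
    rcases Nat.lt_or_ge x.1 y.1 with hlt | hge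
    · have := h3 hlt; omega
    · have := h2 (by omega); omega


section IncPerm

def incPerm (n k a : ℕ) : List (ℕ × ℕ) :=
  (List.range n).map (fun t => ((a + t) % n + 1, k - 1 - ((a + t) / n) % k))

lemma incPerm_length {n k a : ℕ} : (incPerm n k a).length = n := by simp [incPerm]

lemma incPerm_getD {n k a t : ℕ} (ht : t < n) :
    (incPerm n k a).getD t (0,0) = ((a + t) % n + 1, k - 1 - ((a + t) / n) % k) := by
  rw [List.getD_eq_getElem _ _ (by simpa [incPerm_length] using ht)]
  simp [incPerm]

lemma mod_div_step {n : ℕ} (hn : 0 < n) (b : ℕ) (h : b % n < n - 1) :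
    (b + 1) % n = b % n + 1 ∧ (b + 1) / n = b / n := by
  have h1 := Nat.div_add_mod b n
  have e : b + 1 = n * (b / n) + (b % n + 1) := by omega
  constructor
  · rw [e, Nat.mul_add_mod, Nat.mod_eq_of_lt (by omega)]
  · have hz : (b % n + 1) / n = 0 := Nat.div_eq_of_lt (by omega)
    rw [e, Nat.mul_add_div hn, hz, add_zero]

lemma mod_div_wrap {n : ℕ} (hn : 0 < n) (b : ℕ) (h : b % n = n - 1) :
    (b + 1) % n = 0 ∧ (b + 1) / n = b / n + 1 := by
  have h1 := Nat.div_add_mod b n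
  have e : b + 1 = n * (b / n + 1) := by
    have : n * (b / n + 1) = n * (b / n) + n := by ring
    omega
  constructor
  · rw [e, Nat.mul_mod_right]
  · rw [e, Nat.mul_div_cancel_left _ hn]

lemma colour_wrap {k : ℕ} (hk : 0 < k) (r : ℕ) (hr : r < k) :
    k - 1 - ((r + 1) % k) = (k - 1 - r + k - 1) % k := by
  rcases Nat.lt_or_ge r (k - 1) with h | h
  · rw [Nat.mod_eq_of_lt (by omega)]
    have h2 : k ≤ k - 1 - r + k - 1 := by omega
    rw [Nat.mod_eq_sub_mod h2, Nat.mod_eq_of_lt (by omega)]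
    omega
  · have hr' : r = k - 1 := by omega
    subst hr'
    have : k - 1 + 1 = k := by omega
    rw [this, Nat.mod_self, Nat.mod_eq_of_lt (by omega)]
    omega

lemma succ_mod {k q : ℕ} (hk : 0 < k) : (q + 1) % k = (q % k + 1) % k := by
  conv_lhs => rw [← Nat.div_add_mod q k]
  rw [add_assoc, Nat.mul_add_mod]

lemma range_mod_perm {n : ℕ} (hn : 0 < n) (a : ℕ) :
    ((List.range n).map (fun t => (a + t) % n)).Perm (List.range n) := by
  apply List.Subperm.perm_of_length_le
  · apply List.subperm_of_subset
    · apply List.Nodup.map_on _ (List.nodup_range (n := n))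
      intro x hx y hy hxy
      rw [List.mem_range] at hx hy
      have hmod : (a + x) ≡ (a + y) [MOD n] := hxy
      have h2 := Nat.ModEq.add_left_cancel' a hmod
      unfold Nat.ModEq at h2
      rw [Nat.mod_eq_of_lt hx, Nat.mod_eq_of_lt hy] at h2
      exact h2
    · intro x hx
      simp only [List.mem_map, List.mem_range] at hx
      obtain ⟨t, _, rfl⟩ := hx
      exact List.mem_range.mpr (Nat.mod_lt _ hn)
  · simp

lemma incPerm_isIncreasing {n k : ℕ} (hn : 1 ≤ n) (hk : 1 ≤ k) (a : ℕ) :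
    IsIncreasing n k (incPerm n k a) := by
  constructor
  · constructor
    · have : (incPerm n k a).map Prod.fst
          = ((List.range n).map (fun t => (a + t) % n)).map (· + 1) := by
        simp [incPerm, Function.comp]
      rw [this]
      exact (range_mod_perm hn a).map _
    · intro x hx
      simp only [incPerm, List.mem_map] at hx
      obtain ⟨t, _, rfl⟩ := hx
      simp only
      omega
  · intro i hi
    rw [incPerm_length] at hi
    rw [incPerm_getD (by omega), incPerm_getD (by omega)]
    have hb : (a + i) % n < n := Nat.mod_lt _ hn
    rcases Nat.lt_or_ge ((a + i) % n) (n - 1) with h | h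
    · left
      obtain ⟨e1, e2⟩ := mod_div_step hn (a + i) h
      have e3 : a + (i + 1) = (a + i) + 1 := by ring
      rw [e3, e1, e2]
      exact ⟨by omega, by omega, rfl⟩
    · right
      have h' : (a + i) % n = n - 1 := by omega
      obtain ⟨e1, e2⟩ := mod_div_wrap hn (a + i) h'
      have e3 : a + (i + 1) = (a + i) + 1 := by ring
      rw [e3, e1, e2]
      refine ⟨by omega, by omega, ?_⟩
      simp only
      rw [succ_mod hk]
      exact colour_wrap hk _ (Nat.mod_lt _ hk)

lemma pos_incPerm_entry {n k : ℕ} (hn : 1 ≤ n) (hk : 1 ≤ k) (b : ℕ) :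
    pos n ((b % n + 1, k - 1 - (b / n) % k)) = k * n - 1 - (b % (k * n)) := by
  have hr1 : b % n < n := Nat.mod_lt _ hn
  have hr2 : (b / n) % k < k := Nat.mod_lt _ hk
  have hb : b = (k * n) * ((b / n) / k) + (n * ((b / n) % k) + b % n) := by
    have h1 := Nat.div_add_mod b n
    have h2 := Nat.div_add_mod (b / n) k
    calc b = n * (b / n) + b % n := by omega
      _ = n * (k * ((b / n) / k) + (b / n) % k) + b % n := by rw [h2]
      _ = (k * n) * ((b / n) / k) + (n * ((b / n) % k) + b % n) := by ring
  have hlt : n * ((b / n) % k) + b % n < k * n := by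
    have h3 : n * ((b / n) % k + 1) ≤ n * k := Nat.mul_le_mul_left n (by omega)
    have h4 : n * ((b / n) % k + 1) = n * ((b / n) % k) + n := by ring
    have h5 : n * k = k * n := by ring
    omega
  have hbmod : b % (k * n) = n * ((b / n) % k) + b % n := by
    conv_lhs => rw [hb]
    rw [Nat.mul_add_mod, Nat.mod_eq_of_lt hlt]
  rw [hbmod]
  unfold pos
  simp only
  have e : (k - 1 - (b / n) % k) * n + ((b / n) % k + 1) * n = k * n := by
    rw [← add_mul]
    congr 1
    omega
  have e2 : ((b / n) % k + 1) * n = n * ((b / n) % k) + n := by ring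
  omega

end IncPerm

section DecPerm

def decPerm (n k a : ℕ) : List (ℕ × ℕ) := (incPerm n k a).reverse

lemma decPerm_isDecreasing {n k : ℕ} (hn : 1 ≤ n) (hk : 1 ≤ k) (a : ℕ) :
    IsDecreasing n k (decPerm n k a) := by
  unfold IsDecreasing decPerm
  rw [List.reverse_reverse]
  exact incPerm_isIncreasing hn hk a

lemma decPerm_length {n k a : ℕ} : (decPerm n k a).length = n := by
  simp [decPerm, incPerm]

lemma decPerm_getD {n k a s : ℕ} (hs : s < n) :
    (decPerm n k a).getD s (0,0)
      = ((a + (n - 1 - s)) % n + 1, k - 1 - ((a + (n - 1 - s)) / n) % k) := by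
  have hlen : s < (decPerm n k a).length := by rw [decPerm_length]; exact hs
  rw [List.getD_eq_getElem _ _ hlen]
  show (incPerm n k a).reverse[s]'(by rw [List.length_reverse, incPerm_length]; exact hs) = _
  rw [List.getElem_reverse]
  simp only [incPerm, List.getElem_map, List.getElem_range, List.length_map, List.length_range]

lemma decPerm_getD_valid {n k a s : ℕ} (hn : 1 ≤ n) (hk : 1 ≤ k) (hs : s < n) :
    Valid n k ((decPerm n k a).getD s (0,0)) := by
  rw [decPerm_getD hs]
  refine ⟨by simp, ?_, ?_⟩
  · simp only
    have := Nat.mod_lt (a + (n - 1 - s)) (show 0 < n by omega)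
    omega
  · simp only
    omega

lemma pos_decPerm {n k a s : ℕ} (hn : 1 ≤ n) (hk : 1 ≤ k) (hs : s < n) :
    pos n ((decPerm n k a).getD s (0,0)) = k * n - 1 - ((a + (n - 1 - s)) % (k * n)) := by
  rw [decPerm_getD hs]
  exact pos_incPerm_entry hn hk _

end DecPerm

section Gsum

variable {n k : ℕ} {π : List (ℕ × ℕ)}

lemma gsum_succ (t : ℕ) : gsum n k π (t+1)
    = gsum n k π t + gap n k (π.getD t (0,0)) (π.getD (t+1) (0,0)) :=
  Finset.sum_range_succ _ _

lemma gsum_mono {i t : ℕ} (h : i ≤ t) : gsum n k π i ≤ gsum n k π t :=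
  Finset.sum_le_sum_of_subset (Finset.range_subset_range.mpr h)

lemma gap_le_gsum {l t : ℕ} (h : l < t) :
    gap n k (π.getD l (0,0)) (π.getD (l+1) (0,0)) ≤ gsum n k π t := by
  unfold gsum
  exact Finset.single_le_sum
    (f := fun i => gap n k (π.getD i (0,0)) (π.getD (i+1) (0,0)))
    (fun i _ => Nat.zero_le _) (Finset.mem_range.mpr h)

lemma gsum_strictMono (hval : ∀ i < n, Valid n k (π.getD i (0,0)))
    (hne : ∀ i j, i < j → j < n → (π.getD i (0,0)).1 ≠ (π.getD j (0,0)).1)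
    {i j : ℕ} (hij : i < j) (hj : j < n) : gsum n k π i < gsum n k π j := by
  have h1 : gsum n k π i ≤ gsum n k π (j-1) := gsum_mono (by omega)
  have h2 : gsum n k π j = gsum n k π (j-1)
      + gap n k (π.getD (j-1) (0,0)) (π.getD j (0,0)) := by
    have e : j = (j-1) + 1 := by omega
    conv_lhs => rw [e]
    rw [gsum_succ, ← e]
  have h3 : 0 < gap n k (π.getD (j-1) (0,0)) (π.getD j (0,0)) :=
    gap_pos (hval _ (by omega)) (hval _ (by omega)) (hne (j-1) j (by omega) hj)
  omega

lemma gsum_modEq (hval : ∀ i < n, Valid n k (π.getD i (0,0))) :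
    ∀ i, i < n → gsum n k π i + pos n (π.getD 0 (0,0))
      ≡ pos n (π.getD i (0,0)) [MOD k * n] := by
  intro i
  induction i with
  | zero =>
    intro _
    unfold gsum
    simp only [Finset.range_zero, Finset.sum_empty, zero_add]
    exact Nat.ModEq.refl _
  | succ i ih =>
    intro hi
    have h1 := ih (by omega)
    have h2 := gap_add_modEq (hval i (by omega)) (π.getD (i+1) (0,0))
    calc gsum n k π (i+1) + pos n (π.getD 0 (0,0))
        = (gsum n k π i + pos n (π.getD 0 (0,0)))
          + gap n k (π.getD i (0,0)) (π.getD (i+1) (0,0)) := by rw [gsum_succ]; ring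
      _ ≡ pos n (π.getD i (0,0))
          + gap n k (π.getD i (0,0)) (π.getD (i+1) (0,0)) [MOD k*n] := h1.add_right _
      _ = gap n k (π.getD i (0,0)) (π.getD (i+1) (0,0)) + pos n (π.getD i (0,0)) := by ring
      _ ≡ pos n (π.getD (i+1) (0,0)) [MOD k*n] := h2

lemma decpre_of_gsum (hn : 1 ≤ n) (hk : 1 ≤ k)
    (hlen : π.length = n)
    (hval : ∀ i < n, Valid n k (π.getD i (0,0)))
    (hne : ∀ i j, i < j → j < n → (π.getD i (0,0)).1 ≠ (π.getD j (0,0)).1)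
    {t : ℕ} (ht : t + 1 ≤ n) (hS : gsum n k π t ≤ n - 1) :
    IsDecreasingPre n k (π.take (t+1)) := by
  have hK : 0 < k * n := by positivity
  have hkn : n ≤ k * n := Nat.le_mul_of_pos_left n (by omega)
  set p0 := pos n (π.getD 0 (0,0)) with hp0def
  have hp0 : p0 < k * n := pos_lt (hval 0 (by omega))
  set a := 2 * (k * n) - n - p0 with hadef
  refine ⟨decPerm n k a, decPerm_isDecreasing hn hk a, ?_⟩
  have hdi : ∀ i, i ≤ t → gsum n k π i ≤ n - 1 := fun i hi => le_trans (gsum_mono hi) hS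
  have key : ∀ i, i ≤ t → (decPerm n k a).getD (gsum n k π i) (0,0) = π.getD i (0,0) := by
    intro i hi
    have hgi : gsum n k π i ≤ n - 1 := hdi i hi
    have hin : i < n := by omega
    have hpi : pos n (π.getD i (0,0)) < k * n := pos_lt (hval i hin)
    apply pos_inj (decPerm_getD_valid hn hk (by omega)) (hval i hin)
    rw [pos_decPerm hn hk (by omega)]
    set d := gsum n k π i with hddef
    set R := k * n - 1 - pos n (π.getD i (0,0)) with hRdef
    have hcong : d + p0 ≡ pos n (π.getD i (0,0)) [MOD k * n] := gsum_modEq hval i hin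
    have hA : a + (n - 1 - d) + (d + p0) = R + pos n (π.getD i (0,0)) + k * n := by omega
    have c1 : a + (n - 1 - d) + (d + p0) ≡ a + (n - 1 - d) + pos n (π.getD i (0,0)) [MOD k*n] :=
      Nat.ModEq.add_left _ hcong
    rw [hA] at c1
    have c2 : R + pos n (π.getD i (0,0)) + k * n ≡ R + pos n (π.getD i (0,0)) [MOD k*n] := by
      rw [add_comm]
      exact Nat.add_modEq_left
    have c3 : a + (n - 1 - d) + pos n (π.getD i (0,0))
        ≡ R + pos n (π.getD i (0,0)) [MOD k*n] := c1.symm.trans c2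
    have c4 : a + (n - 1 - d) ≡ R [MOD k*n] := c3.add_right_cancel' _
    have c5 : (a + (n - 1 - d)) % (k*n) = R % (k*n) := c4
    rw [c5, Nat.mod_eq_of_lt (by omega)]
    omega
  have hqlen : (decPerm n k a).length = n := decPerm_length
  have hmem : ∀ i ∈ List.range (t+1), i < t + 1 := fun i hi => List.mem_range.mp hi
  set f : ∀ i, i < t + 1 → Fin (decPerm n k a).length :=
    fun i hi => ⟨gsum n k π i, by rw [hqlen]; have := hdi i (by omega); omega⟩ with hfdef
  set is : List (Fin (decPerm n k a).length) := (List.range (t+1)).pmap f hmem with hisdef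
  have hpw : List.Pairwise (fun x y : Fin (decPerm n k a).length => (x:ℕ) < (y:ℕ)) is := by
    apply List.Pairwise.pmap (List.pairwise_lt_range (n := t+1)) hmem
    intro x hx y hy hxy
    simp only [hfdef]
    exact gsum_strictMono hval hne hxy (by omega)
  have hsub := List.map_getElem_sublist hpw
  have heq : π.take (t+1) = is.map (decPerm n k a).get := by
    apply List.ext_getElem
    · simp only [List.length_take, hlen, List.length_map, hisdef, List.length_pmap,
        List.length_range]
      omega
    · intro l h1 h2
      rw [List.getElem_take]
      have hlt : l < t + 1 := by
        simp only [List.length_take, hlen, lt_min_iff] at h1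
        exact h1.1
      have e1 : is[l]'(h2.trans_eq (by simp)) = f l hlt := by
        simp only [hisdef]
        rw [List.getElem_pmap]
        apply Fin.ext
        simp only [hfdef]
        congr 1
        simp
      simp only [List.getElem_map, List.get_eq_getElem, e1, hfdef]
      have e2 : (decPerm n k a)[(gsum n k π l)]'(by rw [hqlen]; have := hdi l (by omega); omega)
          = (decPerm n k a).getD (gsum n k π l) (0,0) :=
        (List.getD_eq_getElem _ _ _).symm
      rw [e2, key l (by omega), List.getD_eq_getElem _ _ (by omega)]
  rw [heq]
  exact hsub

end Gsum

section Forward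

variable {n k : ℕ} {π : List (ℕ × ℕ)}

lemma reverse_getD_valid {q : List (ℕ × ℕ)} (hn : 1 ≤ n) (hk : 1 ≤ k)
    (hinc : IsIncreasing n k q.reverse) (hqlen : q.length = n) :
    ∀ s < n, Valid n k (q.getD s (0,0)) := by
  intro s hs
  have hmem : q.getD s (0,0) ∈ q := by
    rw [List.getD_eq_getElem _ _ (by omega)]
    exact List.getElem_mem _
  have hmemr : q.getD s (0,0) ∈ q.reverse := List.mem_reverse.mpr hmem
  have hc : (q.getD s (0,0)).2 < k := hinc.1.2 _ hmemr
  have hv : (q.getD s (0,0)).1 ∈ (q.reverse.map Prod.fst) :=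
    List.mem_map_of_mem (f := Prod.fst) hmemr
  have hv2 := (hinc.1.1.mem_iff).mp hv
  simp only [List.mem_map, List.mem_range] at hv2
  obtain ⟨i, hi, hieq⟩ := hv2
  exact ⟨by omega, by omega, hc⟩

lemma gsum_le_of_decpre (hn : 1 ≤ n) (hk : 1 ≤ k)
    (hlen : π.length = n)
    (hval : ∀ i < n, Valid n k (π.getD i (0,0)))
    {t : ℕ} (ht : t + 1 ≤ n)
    (hd : IsDecreasingPre n k (π.take (t+1))) : gsum n k π t ≤ n - 1 := by
  have hK : 0 < k * n := by positivity
  have hkn : n ≤ k * n := Nat.le_mul_of_pos_left n (by omega)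
  obtain ⟨q, hq, hsub⟩ := hd
  have hinc : IsIncreasing n k q.reverse := hq
  have hrlen : q.reverse.length = n := by
    have h1 := hinc.1.1.length_eq
    simpa using h1
  have hqlen : q.length = n := by simpa using hrlen
  have hqval := reverse_getD_valid hn hk hinc hqlen
  -- consecutive positions in q
  have hstep : ∀ s, s + 1 < n →
      pos n (q.getD (s+1) (0,0)) ≡ pos n (q.getD s (0,0)) + 1 [MOD k*n] := by
    intro s hs
    have hi : (n - 2 - s) + 1 < q.reverse.length := by omega
    have h2 := hinc.2 (n - 2 - s) hi
    have er1 : q.reverse.getD (n - 2 - s) (0,0) = q.getD (s+1) (0,0) := by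
      rw [List.getD_eq_getElem _ _ (by omega), List.getD_eq_getElem _ _ (by omega),
        List.getElem_reverse]
      congr 1
      omega
    have er2 : q.reverse.getD (n - 2 - s + 1) (0,0) = q.getD s (0,0) := by
      rw [List.getD_eq_getElem _ _ (by omega), List.getD_eq_getElem _ _ (by omega),
        List.getElem_reverse]
      congr 1
      omega
    rw [er1, er2] at h2
    set x := q.getD (s+1) (0,0) with hx
    set y := q.getD s (0,0) with hy
    rcases h2 with ⟨h3, h4, h5⟩ | ⟨h3, h4, h5⟩
    · -- y.1 = x.1 + 1, y.2 = x.2 : pos x = pos y + 1 exactly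
      have : pos n x = pos n y + 1 := by
        unfold pos
        rw [h4, h5]
        omega
      rw [this]
    · -- x.1 = n, y.1 = 1, y.2 = (x.2 + k - 1) % k
      have hxv : Valid n k x := hqval _ (by omega)
      have e1 : pos n x = x.2 * n := by unfold pos; omega
      have e2 : pos n y + 1 = (y.2 + 1) * n := by
        unfold pos
        rw [h4]
        have : 1 ≤ n := hn
        ring_nf
        omega
      rw [e1, e2]
      have hcong : y.2 + 1 ≡ x.2 [MOD k] := by
        rw [h5]
        have c1 : (x.2 + k - 1) % k + 1 ≡ (x.2 + k - 1) + 1 [MOD k] :=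
          (Nat.mod_modEq _ _).add_right _
        have c2 : (x.2 + k - 1) + 1 = x.2 + k := by omega
        have c3 : x.2 + k ≡ x.2 [MOD k] := by
          have : x.2 + k ≡ x.2 + 0 [MOD k] :=
            Nat.ModEq.add_left _ (Nat.modEq_zero_iff_dvd.mpr dvd_rfl)
          simpa using this
        exact c1.trans (by rw [c2]; exact c3)
      exact (Nat.ModEq.mul_right' n hcong).symm
  have hpos : ∀ s, s < n →
      pos n (q.getD s (0,0)) ≡ pos n (q.getD 0 (0,0)) + s [MOD k*n] := by
    intro s
    induction s with
    | zero => intro _; exact Nat.ModEq.refl _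
    | succ s ih =>
      intro hs
      calc pos n (q.getD (s+1) (0,0))
          ≡ pos n (q.getD s (0,0)) + 1 [MOD k*n] := hstep s hs
        _ ≡ (pos n (q.getD 0 (0,0)) + s) + 1 [MOD k*n] := (ih (by omega)).add_right _
        _ = pos n (q.getD 0 (0,0)) + (s+1) := by ring
  obtain ⟨is, heq, hpw⟩ := List.sublist_eq_map_getElem hsub
  have hislen : is.length = t + 1 := by
    have h1 : (π.take (t+1)).length = t + 1 := by
      rw [List.length_take]
      omega
    rw [heq] at h1
    simpa using h1
  have hmono : ∀ l1 l2 (h1 : l1 < is.length) (h2 : l2 < is.length), l1 < l2 →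
      ((is[l1]'h1 : Fin q.length) : ℕ) < ((is[l2]'h2 : Fin q.length) : ℕ) := by
    intro l1 l2 h1 h2 hl
    exact List.pairwise_iff_getElem.mp hpw l1 l2 h1 h2 hl
  have hπq : ∀ l (hl : l < t + 1),
      π.getD l (0,0) = q.getD ((is[l]'(by omega) : Fin q.length) : ℕ) (0,0) := by
    intro l hl
    have h1 : (π.take (t+1))[l]'(by rw [List.length_take]; omega)
        = (is.map q.get)[l]'(by rw [List.length_map]; omega) :=
      List.getElem_of_eq heq _
    rw [List.getElem_take, List.getElem_map] at h1
    rw [List.getD_eq_getElem _ _ (by omega), List.getD_eq_getElem _ _ (by omega)]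
    exact h1
  have hposπ : ∀ l (hl : l < t + 1),
      pos n (π.getD l (0,0)) ≡ pos n (q.getD 0 (0,0))
        + ((is[l]'(by omega) : Fin q.length) : ℕ) [MOD k*n] := by
    intro l hl
    rw [hπq l hl]
    exact hpos _ (by rw [← hqlen]; exact (is[l]'(by omega)).isLt)
  have hgap : ∀ l (hl2 : l < t),
      gap n k (π.getD l (0,0)) (π.getD (l+1) (0,0))
        = ((is[l+1]'(by omega) : Fin q.length) : ℕ) - ((is[l]'(by omega) : Fin q.length) : ℕ) := by
    intro l hl
    set u := ((is[l]'(by omega) : Fin q.length) : ℕ) with hu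
    set v := ((is[l+1]'(by omega) : Fin q.length) : ℕ) with hv
    have huv : u < v := hmono l (l+1) (by omega) (by omega) (by omega)
    have hvn : v < n := by rw [← hqlen]; exact (is[l+1]'(by omega)).isLt
    apply gap_eq_of_modEq (hval l (by omega)) (by omega)
    have c1 : (v - u) + pos n (π.getD l (0,0))
        ≡ (v - u) + (pos n (q.getD 0 (0,0)) + u) [MOD k*n] :=
      Nat.ModEq.add_left _ (hposπ l (by omega))
    have c2 : (v - u) + (pos n (q.getD 0 (0,0)) + u) = pos n (q.getD 0 (0,0)) + v := by omega
    rw [c2] at c1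
    exact c1.trans (hposπ (l+1) (by omega)).symm
  have htel : ∀ u (hu2 : u ≤ t), gsum n k π u + ((is[0]'(by omega) : Fin q.length) : ℕ)
      = ((is[u]'(by omega) : Fin q.length) : ℕ) := by
    intro u
    induction u with
    | zero =>
      intro _
      unfold gsum
      simp
    | succ u ih =>
      intro hu
      have h1 := ih (by omega)
      have h2 := hgap u (by omega)
      have h3 : ((is[u]'(by omega) : Fin q.length) : ℕ)
          < ((is[u+1]'(by omega) : Fin q.length) : ℕ) := hmono _ _ _ _ (by omega)
      rw [gsum_succ, h2]
      omega
  have h1 := htel t (le_refl t)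
  have h2 : ((is[t]'(by omega) : Fin q.length) : ℕ) < n := by
    rw [← hqlen]
    exact (is[t]'(by omega)).isLt
  omega

end Forward

section Count

variable {n k : ℕ} {π : List (ℕ × ℕ)}

def ascCount (π : List (ℕ × ℕ)) (t : ℕ) : ℕ :=
  ((Finset.Icc 1 t).filter (fun i => (π.getD (i - 1) (0,0)).1 < (π.getD i (0,0)).1)).card

lemma ascCount_zero : ascCount π 0 = 0 := by simp [ascCount]

lemma ascCount_succ (t : ℕ) : ascCount π (t+1) =
    ascCount π t + (if (π.getD t (0,0)).1 < (π.getD (t+1) (0,0)).1 then 1 else 0) := by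
  unfold ascCount
  have h : Finset.Icc 1 (t+1) = insert (t+1) (Finset.Icc 1 t) := by
    ext x
    simp only [Finset.mem_Icc, Finset.mem_insert]
    omega
  rw [h, Finset.filter_insert]
  have hnm : (t+1) ∉ Finset.Icc 1 t := by simp
  have e : (t + 1) - 1 = t := by omega
  by_cases hc : (π.getD t (0,0)).1 < (π.getD (t+1) (0,0)).1
  · rw [if_pos (by rw [e]; exact hc), if_pos hc,
      Finset.card_insert_of_notMem (fun hx => hnm (Finset.mem_of_mem_filter _ hx))]
  · rw [if_neg (by rw [e]; exact hc), if_neg hc, add_zero]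

lemma gap_val_of_le {x y : ℕ × ℕ} (hx : Valid n k x) (hy : Valid n k y)
    (hne : x.1 ≠ y.1) (h : gap n k x y ≤ n - 1) :
    (y.1 < x.1 → gap n k x y = x.1 - y.1) ∧
      (x.1 < y.1 → gap n k x y = n - (y.1 - x.1)) := by
  have hn : 0 < n := hx.1.trans hx.2.1
  by_cases hb : Bad k x y
  · have := gap_bad hx hy hb
    omega
  · exact (gap_good hx hy hne hb).2

lemma gsum_formula (hn : 1 ≤ n) (hk : 1 ≤ k)
    (hval : ∀ i < n, Valid n k (π.getD i (0,0)))
    (hne : ∀ i j, i < j → j < n → (π.getD i (0,0)).1 ≠ (π.getD j (0,0)).1) :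
    ∀ t (htn : t < n),
      (∀ l (hl : l < t), gap n k (π.getD l (0,0)) (π.getD (l+1) (0,0)) ≤ n - 1) →
      gsum n k π t + (π.getD t (0,0)).1 = n * ascCount π t + (π.getD 0 (0,0)).1 := by
  intro t
  induction t with
  | zero =>
    intro _ _
    rw [ascCount_zero]
    unfold gsum
    simp
  | succ t ih =>
    intro htn hgood
    have h1 := ih (by omega) (fun l hl => hgood l (by omega))
    have hg := hgood t (by omega)
    have hxv := hval t (by omega)
    have hyv := hval (t+1) htn
    have hnev := hne t (t+1) (by omega) htn
    obtain ⟨hdval, haval⟩ := gap_val_of_le hxv hyv hnev hg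
    have hv0 : 1 ≤ (π.getD 0 (0,0)).1 := (hval 0 (by omega)).1
    have hvt1 : 1 ≤ (π.getD t (0,0)).1 := hxv.1
    have hvt2 : (π.getD t (0,0)).1 ≤ n := hxv.2.1
    have hvs1 : 1 ≤ (π.getD (t+1) (0,0)).1 := hyv.1
    have hvs2 : (π.getD (t+1) (0,0)).1 ≤ n := hyv.2.1
    rw [gsum_succ, ascCount_succ]
    rcases Nat.lt_or_ge (π.getD t (0,0)).1 (π.getD (t+1) (0,0)).1 with hasc | hdesc
    · rw [if_pos hasc, haval hasc, Nat.mul_add, Nat.mul_one]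
      omega
    · have hlt : (π.getD (t+1) (0,0)).1 < (π.getD t (0,0)).1 := by omega
      rw [if_neg (by omega), hdval hlt, add_zero]
      omega

lemma notDescCond_of_decpre (hn : 1 ≤ n) (hk : 1 ≤ k)
    (hlen : π.length = n)
    (hval : ∀ i < n, Valid n k (π.getD i (0,0)))
    (hne : ∀ i j, i < j → j < n → (π.getD i (0,0)).1 ≠ (π.getD j (0,0)).1)
    {t : ℕ} (h1 : 1 ≤ t) (h2 : t ≤ n - 1)
    (hd : IsDecreasingPre n k (π.take (t+1))) : ¬ descCond k π t := by
  have ht : t + 1 ≤ n := by omega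
  have hS : gsum n k π t ≤ n - 1 := gsum_le_of_decpre hn hk hlen hval ht hd
  have hgood : ∀ l (hl : l < t), gap n k (π.getD l (0,0)) (π.getD (l+1) (0,0)) ≤ n - 1 :=
    fun l hl => le_trans (gap_le_gsum hl) hS
  have hform := gsum_formula hn hk hval hne t (by omega) hgood
  intro hdc
  have hv0 : 1 ≤ (π.getD 0 (0,0)).1 := (hval 0 (by omega)).1
  have hvt2 : (π.getD t (0,0)).1 ≤ n := (hval t (by omega)).2.1
  rcases hdc with hca | hcb | hcc | hcd
  · have hac : ascCount π t = 2 := hca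
    rw [hac, Nat.mul_two] at hform
    omega
  · obtain ⟨hc1, hc2⟩ := hcb
    have hac : ascCount π t = 1 := hc1
    rw [hac, Nat.mul_one] at hform
    omega
  · obtain ⟨hk1, hlt, hD⟩ := hcc
    have hb : Bad k (π.getD (t-1) (0,0)) (π.getD t (0,0)) := Or.inl ⟨hk1, hlt, hD⟩
    have hbad := gap_bad (hval (t-1) (by omega)) (hval t (by omega)) hb
    have hgd := hgood (t-1) (by omega)
    rw [show t - 1 + 1 = t from by omega] at hgd
    omega
  · obtain ⟨hk1, hlt, hD⟩ := hcd
    have hb : Bad k (π.getD (t-1) (0,0)) (π.getD t (0,0)) := Or.inr ⟨hk1, hlt, hD⟩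
    have hbad := gap_bad (hval (t-1) (by omega)) (hval t (by omega)) hb
    have hgd := hgood (t-1) (by omega)
    rw [show t - 1 + 1 = t from by omega] at hgd
    omega

lemma descCond_of_boundary (hn : 1 ≤ n) (hk : 1 ≤ k)
    (hlen : π.length = n)
    (hval : ∀ i < n, Valid n k (π.getD i (0,0)))
    (hne : ∀ i j, i < j → j < n → (π.getD i (0,0)).1 ≠ (π.getD j (0,0)).1)
    {t : ℕ} (h1 : 1 ≤ t) (h2 : t ≤ n - 1)
    (hd : IsDecreasingPre n k (π.take t))
    (hnd : ¬ IsDecreasingPre n k (π.take (t+1))) : descCond k π t := by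
  have ht : t + 1 ≤ n := by omega
  have hS1 : gsum n k π (t-1) ≤ n - 1 := by
    apply gsum_le_of_decpre hn hk hlen hval (by omega)
    rw [show t - 1 + 1 = t from by omega]
    exact hd
  have hS2 : n ≤ gsum n k π t := by
    by_contra hcon
    push_neg at hcon
    exact hnd (decpre_of_gsum hn hk hlen hval hne ht (by omega))
  have hgood1 : ∀ l (hl : l < t - 1),
      gap n k (π.getD l (0,0)) (π.getD (l+1) (0,0)) ≤ n - 1 :=
    fun l hl => le_trans (gap_le_gsum hl) hS1
  by_cases hb : Bad k (π.getD (t-1) (0,0)) (π.getD t (0,0))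
  · rcases hb with ⟨c1, c2, c3⟩ | ⟨c1, c2, c3⟩
    · exact Or.inr (Or.inr (Or.inl ⟨c1, c2, c3⟩))
    · exact Or.inr (Or.inr (Or.inr ⟨c1, c2, c3⟩))
  · have hgt : gap n k (π.getD (t-1) (0,0)) (π.getD t (0,0)) ≤ n - 1 :=
      (gap_good (hval (t-1) (by omega)) (hval t (by omega))
        (hne (t-1) t (by omega) (by omega)) hb).1
    have hgood : ∀ l (hl : l < t),
        gap n k (π.getD l (0,0)) (π.getD (l+1) (0,0)) ≤ n - 1 := by
      intro l hl
      rcases Nat.lt_or_ge l (t-1) with h | h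
      · exact hgood1 l h
      · have hleq : l = t - 1 := by omega
        subst hleq
        rw [show t - 1 + 1 = t from by omega]
        exact hgt
    have hform := gsum_formula hn hk hval hne t (by omega) hgood
    have hform1 := gsum_formula hn hk hval hne (t-1) (by omega) hgood1
    have hacc := ascCount_succ (π := π) (t-1)
    rw [show t - 1 + 1 = t from by omega] at hacc
    have hv0a : 1 ≤ (π.getD 0 (0,0)).1 := (hval 0 (by omega)).1
    have hv0b : (π.getD 0 (0,0)).1 ≤ n := (hval 0 (by omega)).2.1
    have hvta : 1 ≤ (π.getD t (0,0)).1 := (hval t (by omega)).1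
    have hvtb : (π.getD t (0,0)).1 ≤ n := (hval t (by omega)).2.1
    have hvsa : 1 ≤ (π.getD (t-1) (0,0)).1 := (hval (t-1) (by omega)).1
    have hvsb : (π.getD (t-1) (0,0)).1 ≤ n := (hval (t-1) (by omega)).2.1
    have ha1 : 1 ≤ ascCount π t := by
      by_contra h0
      push_neg at h0
      have h0' : ascCount π t = 0 := by omega
      rw [h0', Nat.mul_zero] at hform
      omega
    have hacm1 : ascCount π (t-1) ≤ 1 := by
      by_contra h0
      push_neg at h0
      have h2n : n * 2 ≤ n * ascCount π (t-1) := Nat.mul_le_mul_left n (by omega)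
      omega
    have ha2 : ascCount π t ≤ 2 := by
      rcases Nat.lt_or_ge (π.getD (t-1) (0,0)).1 (π.getD t (0,0)).1 with hc | hc
      · rw [if_pos hc] at hacc; omega
      · rw [if_neg (by omega)] at hacc; omega
    rcases Nat.eq_or_lt_of_le ha2 with hceq | hclt
    · exact Or.inl hceq
    · have hac1 : ascCount π t = 1 := by omega
      refine Or.inr (Or.inl ⟨hac1, ?_⟩)
      rw [hac1, Nat.mul_one] at hform
      have hnev := hne 0 t (by omega) (by omega)
      omega

end Count

end LDP

/-- For `π ∈ CPERMS(n,k)`, the length `j` of the longest decreasing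
prefix of `π` equals the least `j' ∈ {1,…,n-1}` satisfying one of the conditions
(a)–(d) of `descCond`, or equals `n` if no such `j'` exists. -/
theorem longest_decreasing_prefix_rule (n k : ℕ) (hn : 1 ≤ n) (hk : 1 ≤ k)
    (π : List (ℕ × ℕ)) (hπ : IsCPerm n k π)
    (j : ℕ) (hjle : j ≤ π.length)
    (hdec : IsDecreasingPre n k (π.take j))
    (hmax : ∀ t, t ≤ π.length → IsDecreasingPre n k (π.take t) → t ≤ j) :
    (∃ j', (1 ≤ j' ∧ j' ≤ n - 1 ∧ descCond k π j') ∧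
      (∀ t, 1 ≤ t → t ≤ n - 1 → descCond k π t → j' ≤ t) ∧ j = j') ∨
    ((∀ t, 1 ≤ t → t ≤ n - 1 → ¬ descCond k π t) ∧ j = n) := by
  obtain ⟨hperm, hcol⟩ := hπ
  have hlen : π.length = n := by
    have h := hperm.length_eq
    simpa using h
  have hval : ∀ i < n, LDP.Valid n k (π.getD i (0,0)) := by
    intro i hi
    have hmem : π.getD i (0,0) ∈ π := by
      rw [List.getD_eq_getElem _ _ (by omega)]
      exact List.getElem_mem _
    have hcols := hcol _ hmem
    have hv : (π.getD i (0,0)).1 ∈ π.map Prod.fst := List.mem_map_of_mem hmem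
    have hv2 := hperm.mem_iff.mp hv
    simp only [List.mem_map, List.mem_range] at hv2
    obtain ⟨w, hw, hweq⟩ := hv2
    exact ⟨by omega, by omega, hcols⟩
  have hnodup : (π.map Prod.fst).Nodup := by
    have h2 : ((List.range n).map (· + 1)).Nodup :=
      List.Nodup.map (fun a b hab => by omega) (List.nodup_range (n := n))
    exact hperm.nodup_iff.mpr h2
  have hne : ∀ i j', i < j' → j' < n → (π.getD i (0,0)).1 ≠ (π.getD j' (0,0)).1 := by
    intro i j' hij hj' heq
    have hi' : i < (π.map Prod.fst).length := by rw [List.length_map, hlen]; omega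
    have hj'' : j' < (π.map Prod.fst).length := by rw [List.length_map, hlen]; omega
    have e1 : (π.map Prod.fst)[i]'hi' = (π.getD i (0,0)).1 := by
      rw [List.getElem_map]
      rw [List.getD_eq_getElem _ _ (by rw [hlen]; omega)]
    have e2 : (π.map Prod.fst)[j']'hj'' = (π.getD j' (0,0)).1 := by
      rw [List.getElem_map]
      rw [List.getD_eq_getElem _ _ (by rw [hlen]; omega)]
    have : i = j' := (hnodup.getElem_inj_iff).mp (by rw [e1, e2, heq])
    omega
  have hj1 : 1 ≤ j := by
    apply hmax 1 (by omega)
    have h0 : LDP.gsum n k π 0 ≤ n - 1 := by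
      unfold LDP.gsum
      simp
    exact LDP.decpre_of_gsum hn hk hlen hval hne (by omega) h0
  have hdecsub : ∀ t, t + 1 ≤ j → IsDecreasingPre n k (π.take (t+1)) := by
    intro t htj
    obtain ⟨q, hq, hs⟩ := hdec
    refine ⟨q, hq, List.Sublist.trans ?_ hs⟩
    rw [show π.take (t+1) = (π.take j).take (t+1) from by
      rw [List.take_take]; congr 1; omega]
    exact List.take_sublist _ _
  rcases Nat.lt_or_ge j n with hjn | hjn
  · left
    refine ⟨j, ⟨hj1, by omega, ?_⟩, ?_, rfl⟩
    · apply LDP.descCond_of_boundary hn hk hlen hval hne hj1 (by omega) hdec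
      intro hcon
      have := hmax (j+1) (by omega) hcon
      omega
    · intro t ht1 ht2 hdc
      by_contra hcon
      push_neg at hcon
      exact LDP.notDescCond_of_decpre hn hk hlen hval hne ht1 ht2
        (hdecsub t (by omega)) hdc
  · right
    have hjeq : j = n := by omega
    refine ⟨fun t ht1 ht2 hdc => ?_, hjeq⟩
    exact LDP.notDescCond_of_decpre hn hk hlen hval hne ht1 ht2
      (hdecsub t (by omega)) hdc
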